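/- Let F be a finite union-closed family of finite sets with nonempty union. If F contains a nonempty set S with |S| ≤ 2, then there exists a ∈ ⋃F such that |F_a| ≥ |F|/2. -/

import Mathlib

/-- A finite family of finite sets is union-closed if it is closed under pairwise unions. -/
def UnionClosed (F : Finset (Finset ℕ)) : Prop :=
  ∀ A ∈ F, ∀ B ∈ F, A ∪ B ∈ F

lemma key_inj (F : Finset (Finset ℕ)) (hUC : UnionClosed F) (S : Finset ℕ) (hS : S ∈ F) :
    (F.filter (fun T => Disjoint T S)).card ≤ (F.filter (fun T => S ⊆ T)).card := by
  apply Finset.card_le_card_of_injOn (fun T => T ∪ S)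
  · intro T hT
    simp only [Finset.mem_coe, Finset.mem_filter] at hT ⊢
    exact ⟨hUC T hT.1 S hS, Finset.subset_union_right⟩
  · intro T1 h1 T2 h2 h
    simp only [Finset.coe_filter, Set.mem_setOf_eq] at h1 h2
    have e1 : (T1 ∪ S) \ S = T1 := Finset.union_sdiff_cancel_right h1.2
    have e2 : (T2 ∪ S) \ S = T2 := Finset.union_sdiff_cancel_right h2.2
    rw [← e1, ← e2]; exact congrArg (· \ S) h

theorem stmt_13 (F : Finset (Finset ℕ)) (hUC : UnionClosed F)
    (hne : (F.sup id).Nonempty)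
    (hS : ∃ S ∈ F, S.Nonempty ∧ S.card ≤ 2) :
    ∃ a ∈ F.sup id, ((F.filter (fun S => a ∈ S)).card : ℝ) ≥ (F.card : ℝ) / 2 := by
  obtain ⟨S, hSF, hSne, hScard⟩ := hS
  have hmemsup : ∀ x ∈ S, x ∈ F.sup id := fun x hx =>
    Finset.mem_sup.2 ⟨S, hSF, hx⟩
  have h1 : 1 ≤ S.card := Finset.card_pos.2 hSne
  interval_cases h : S.card
  · -- card = 1
    obtain ⟨a, rfl⟩ := Finset.card_eq_one.1 h
    refine ⟨a, hmemsup a (Finset.mem_singleton_self a), ?_⟩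
    have hk := key_inj F hUC {a} hSF
    have hsplit : (F.filter (fun T => a ∈ T)).card + (F.filter (fun T => ¬ a ∈ T)).card = F.card :=
      Finset.card_filter_add_card_filter_not _
    have heq1 : (F.filter (fun T => Disjoint T {a})) = F.filter (fun T => ¬ a ∈ T) := by
      apply Finset.filter_congr; intro T _; simp [Finset.disjoint_singleton_right]
    have heq2 : (F.filter (fun T => ({a} : Finset ℕ) ⊆ T)) = F.filter (fun T => a ∈ T) := by
      apply Finset.filter_congr; intro T _; simp [Finset.singleton_subset_iff]
    rw [heq1, heq2] at hk
    have hn : F.card ≤ (F.filter (fun T => a ∈ T)).card * 2 := by omega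
    rw [ge_iff_le, div_le_iff₀ (by norm_num)]
    exact_mod_cast hn
  · -- card = 2
    obtain ⟨a, b, hab, rfl⟩ := Finset.card_eq_two.1 h
    have hk := key_inj F hUC {a, b} hSF
    set Fa := F.filter (fun T => a ∈ T) with hFa
    set Fb := F.filter (fun T => b ∈ T) with hFb
    have hunion : Fa ∪ Fb = F.filter (fun T => a ∈ T ∨ b ∈ T) := by
      rw [hFa, hFb, Finset.filter_or]
    have hinter : Fa ∩ Fb = F.filter (fun T => a ∈ T ∧ b ∈ T) := by
      rw [hFa, hFb, Finset.filter_and]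
    have hneither : (F.filter (fun T => ¬ (a ∈ T ∨ b ∈ T))) = F.filter (fun T => Disjoint T {a, b}) := by
      apply Finset.filter_congr; intro T _
      simp [Finset.disjoint_insert_right, Finset.disjoint_singleton_right]
    have hsub : (F.filter (fun T => ({a, b} : Finset ℕ) ⊆ T)) ⊆ Fa ∩ Fb := by
      rw [hinter]
      intro T hT
      simp only [Finset.mem_filter, Finset.insert_subset_iff, Finset.singleton_subset_iff] at hT ⊢
      exact ⟨hT.1, hT.2.1, hT.2.2⟩
    have hsplit : (F.filter (fun T => a ∈ T ∨ b ∈ T)).card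
        + (F.filter (fun T => ¬ (a ∈ T ∨ b ∈ T))).card = F.card :=
      Finset.card_filter_add_card_filter_not _
    have hcc : Fa.card + Fb.card = (Fa ∪ Fb).card + (Fa ∩ Fb).card :=
      (Finset.card_union_add_card_inter Fa Fb).symm
    have h2 : (Fa ∩ Fb).card ≥ (F.filter (fun T => ¬ (a ∈ T ∨ b ∈ T))).card := by
      calc (Fa ∩ Fb).card ≥ (F.filter (fun T => ({a, b} : Finset ℕ) ⊆ T)).card :=
            Finset.card_le_card hsub
        _ ≥ (F.filter (fun T => Disjoint T {a, b})).card := hk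
        _ = (F.filter (fun T => ¬ (a ∈ T ∨ b ∈ T))).card := by rw [hneither]
    have hmain : Fa.card + Fb.card ≥ F.card := by
      rw [hcc, hunion]
      omega
    rcases le_total Fa.card Fb.card with hle | hle
    · refine ⟨b, hmemsup b (by simp), ?_⟩
      rw [ge_iff_le, div_le_iff₀ (by norm_num)]
      have hn : F.card ≤ Fb.card * 2 := by omega
      exact_mod_cast hn
    · refine ⟨a, hmemsup a (by simp), ?_⟩
      rw [ge_iff_le, div_le_iff₀ (by norm_num)]
      have hn : F.card ≤ Fa.card * 2 := by omega
      exact_mod_cast hn
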